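/- For every natural number n and every Γ ∈ {Σ, Π}, the least Γ¹ₙ-reflecting ordinal is countable; indeed, the set of Σ¹ₙ-reflecting ordinals and the set of Π¹ₙ-reflecting ordinals each contain a club subset of ω₁. -/

import Mathlib

open scoped Classical

/-! # Core framework: second-order logic over levels of Gödel's `L` -/

/-- The von Neumann natural numbers inside `ZFSet`. -/
noncomputable def natToZF : ℕ → ZFSet.{0}
  | 0 => ∅
  | n+1 => insert (natToZF n) (natToZF n)

/-- Formulas of second-order logic in the language of set theory (de Bruijn indices,
first-order variables and second-order (subset) variables). -/
inductive SOFormula : Type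
  | memFF : ℕ → ℕ → SOFormula        -- xᵢ ∈ xⱼ
  | eqFF  : ℕ → ℕ → SOFormula        -- xᵢ = xⱼ
  | memFS : ℕ → ℕ → SOFormula        -- xᵢ ∈ Xⱼ
  | not   : SOFormula → SOFormula
  | and   : SOFormula → SOFormula → SOFormula
  | allFO : SOFormula → SOFormula
  | exFO  : SOFormula → SOFormula
  | allSO : SOFormula → SOFormula
  | exSO  : SOFormula → SOFormula

/-- Prepend a value to a valuation (de Bruijn style). -/
def consF {α : Sort _} (a : α) (v : ℕ → α) : ℕ → α
  | 0 => a
  | n+1 => v n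

/-- Satisfaction of a second-order formula in the structure `(A, ∈)`, where first-order
quantifiers range over the elements of `A`, and second-order quantifiers range over those
subsets `S` of `A` satisfying the predicate `D` (taking `D := fun _ => True` gives full
second-order logic, i.e. quantification over the full powerset of `A`; other choices of `D`
give the relativization of satisfaction to an inner model or a generic extension). -/
def SOSatIn (D : Set ZFSet.{0} → Prop) (A : ZFSet.{0}) :
    SOFormula → (ℕ → ZFSet.{0}) → (ℕ → Set ZFSet.{0}) → Prop
  | .memFF i j, v, _ => v i ∈ v j
  | .eqFF i j, v, _ => v i = v j
  | .memFS i j, v, V => v i ∈ V j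
  | .not φ, v, V => ¬ SOSatIn D A φ v V
  | .and φ ψ, v, V => SOSatIn D A φ v V ∧ SOSatIn D A ψ v V
  | .allFO φ, v, V => ∀ a : ZFSet, a ∈ A → SOSatIn D A φ (consF a v) V
  | .exFO φ, v, V => ∃ a : ZFSet, a ∈ A ∧ SOSatIn D A φ (consF a v) V
  | .allSO φ, v, V => ∀ S : Set ZFSet, S ⊆ A.toSet → D S → SOSatIn D A φ v (consF S V)
  | .exSO φ, v, V => ∃ S : Set ZFSet, S ⊆ A.toSet ∧ D S ∧ SOSatIn D A φ v (consF S V)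

/-- Full (unrelativized) second-order satisfaction over `(A, ∈)`. -/
def SOSat (A : ZFSet.{0}) : SOFormula → (ℕ → ZFSet.{0}) → (ℕ → Set ZFSet.{0}) → Prop :=
  SOSatIn (fun _ => True) A

/-- A formula with no second-order quantifiers ("arithmetic" / second-order quantifier free). -/
def NoSOQuant : SOFormula → Prop
  | .memFF _ _ => True
  | .eqFF _ _ => True
  | .memFS _ _ => True
  | .not φ => NoSOQuant φ
  | .and φ ψ => NoSOQuant φ ∧ NoSOQuant ψ
  | .allFO φ => NoSOQuant φ
  | .exFO φ => NoSOQuant φ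
  | .allSO _ => False
  | .exSO _ => False

mutual
  /-- `Σ¹ₙ` formulas: `n` alternating blocks of second-order quantifiers, starting with `∃`,
  in front of a second-order quantifier free matrix. -/
  inductive IsSigmaSO : ℕ → SOFormula → Prop
    | arith {φ : SOFormula} (n : ℕ) : NoSOQuant φ → IsSigmaSO n φ
    | exq {n : ℕ} {φ : SOFormula} : IsPiSO n φ → IsSigmaSO (n+1) (SOFormula.exSO φ)
    | exq2 {n : ℕ} {φ : SOFormula} : IsSigmaSO (n+1) φ → IsSigmaSO (n+1) (SOFormula.exSO φ)
  /-- `Π¹ₙ` formulas. -/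
  inductive IsPiSO : ℕ → SOFormula → Prop
    | arith {φ : SOFormula} (n : ℕ) : NoSOQuant φ → IsPiSO n φ
    | allq {n : ℕ} {φ : SOFormula} : IsSigmaSO n φ → IsPiSO (n+1) (SOFormula.allSO φ)
    | allq2 {n : ℕ} {φ : SOFormula} : IsPiSO (n+1) φ → IsPiSO (n+1) (SOFormula.allSO φ)
end

/-- The two pointclasses `Σ` and `Π`. -/
inductive SOClass : Type
  | sigma : SOClass
  | pi : SOClass

/-- `Γ¹ₙ` formulas, for `Γ ∈ {Σ, Π}`. -/
def IsGammaSO : SOClass → ℕ → SOFormula → Prop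
  | .sigma => IsSigmaSO
  | .pi => IsPiSO

/-- `x` is a subset of `A` which is definable over `(A, ∈)` by a first-order formula
with parameters from `A`. -/
def DefinableSub (A x : ZFSet.{0}) : Prop :=
  ∃ (φ : SOFormula) (v : ℕ → ZFSet), NoSOQuant φ ∧ (∀ n, v n ∈ A) ∧
    ∀ y, y ∈ x ↔ y ∈ A ∧ SOSat A φ (consF y v) (fun _ => ∅)

/-- The definable powerset operation. -/
noncomputable def defPow (A : ZFSet.{0}) : ZFSet.{0} :=
  ZFSet.sep (fun x => DefinableSub A x) (ZFSet.powerset A)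

/-- The `o`-th level `L_o` of Gödel's constructible hierarchy. -/
noncomputable def LSet (o : Ordinal.{0}) : ZFSet.{0} :=
  Ordinal.limitRecOn o ∅ (fun _ ih => defPow ih)
    (fun o' _ ih => ZFSet.sUnion (ZFSet.range (fun i : o'.ToType =>
      ih ((@Ordinal.ToType.mk o').symm i).1 ((@Ordinal.ToType.mk o').symm i).2)))

/-- A set is constructible if it belongs to some level of the `L`-hierarchy. -/
def Constructible (x : ZFSet.{0}) : Prop := ∃ o : Ordinal.{0}, x ∈ LSet o

/-- The collection of subsets of the universe that exist in `L`
(used to relativize second-order quantifiers to `L`). -/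
def ConstructibleD : Set ZFSet.{0} → Prop :=
  fun S => ∃ z : ZFSet, Constructible z ∧ S = z.toSet

/-- The von Neumann ordinal corresponding to an `Ordinal`. -/
noncomputable def ordToZF (o : Ordinal.{0}) : ZFSet.{0} :=
  ZFSet.range (fun i : o.ToType =>
    have : ((@Ordinal.ToType.mk o).symm i).1 < o := ((@Ordinal.ToType.mk o).symm i).2
    ordToZF ((@Ordinal.ToType.mk o).symm i).1)
  termination_by o
  decreasing_by exact this

/-- The valuation assigning the (von Neumann codes of the) ordinal parameters
`β 0, …, β (l-1)` to the first `l` first-order variables. -/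
noncomputable def paramVal (l : ℕ) (β : ℕ → Ordinal.{0}) : ℕ → ZFSet.{0} :=
  fun i => if i < l then ordToZF (β i) else ∅

/-- `α` is `Γ¹ₙ`-reflecting, with second-order quantifiers relativized to `D`:
for every tuple `β 0 < … < β (l-1) < α` and every `Γ¹ₙ` formula `φ`, if `L_α ⊨ φ(β⃗)`
then there is `α'` with `β (l-1) < α' < α` and `L_{α'} ⊨ φ(β⃗)`. -/
def ReflectingIn (D : Set ZFSet.{0} → Prop) (Γ : SOClass) (n : ℕ) (α : Ordinal.{0}) : Prop :=
  ∀ (l : ℕ) (β : ℕ → Ordinal.{0}),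
    (∀ i j, i < j → j < l → β i < β j) → (∀ i, i < l → β i < α) →
    ∀ φ : SOFormula, IsGammaSO Γ n φ →
      SOSatIn D (LSet α) φ (paramVal l β) (fun _ => ∅) →
      ∃ α' : Ordinal, (∀ i, i < l → β i < α') ∧ α' < α ∧
        SOSatIn D (LSet α') φ (paramVal l β) (fun _ => ∅)

/-- `α` is `Γ¹ₙ`-reflecting (full second-order logic, i.e. computed in `V`). -/
def Reflecting : SOClass → ℕ → Ordinal.{0} → Prop := ReflectingIn (fun _ => True)

/-- The least `Γ¹ₙ`-reflecting ordinal, relativized to `D`. -/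
noncomputable def leastReflecting (D : Set ZFSet.{0} → Prop) (Γ : SOClass) (n : ℕ) :
    Ordinal.{0} :=
  sInf {α | ReflectingIn D Γ n α}

/-- `σ¹ₙ`, the least `Σ¹ₙ`-reflecting ordinal. -/
noncomputable def sigma1 (n : ℕ) : Ordinal.{0} := leastReflecting (fun _ => True) .sigma n

/-- `π¹ₙ`, the least `Π¹ₙ`-reflecting ordinal. -/
noncomputable def pi1 (n : ℕ) : Ordinal.{0} := leastReflecting (fun _ => True) .pi n

/-- `(σ¹ₙ)^L`. -/
noncomputable def sigma1L (n : ℕ) : Ordinal.{0} := leastReflecting ConstructibleD .sigma n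

/-- `(π¹ₙ)^L`. -/
noncomputable def pi1L (n : ℕ) : Ordinal.{0} := leastReflecting ConstructibleD .pi n

/-- The first uncountable ordinal `ω₁` (of `V`). -/
noncomputable def omega1V : Ordinal.{0} := (Cardinal.aleph 1).ord


/-- `C` is a club (closed unbounded set) in `κ`: it is unbounded below `κ` and contains
every nonzero `δ < κ` in which it is unbounded. -/
def IsClubIn (C : Set Ordinal.{0}) (κ : Ordinal.{0}) : Prop :=
  (∀ β < κ, ∃ γ ∈ C, β < γ ∧ γ < κ) ∧
  (∀ δ < κ, δ ≠ 0 → (∀ β < δ, ∃ γ ∈ C, β < γ ∧ γ < δ) → δ ∈ C)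



section Aux

/-- encoding of SOFormula into ℕ -/
private def encSO : SOFormula → ℕ
  | .memFF i j => Nat.pair 0 (Nat.pair i j)
  | .eqFF i j => Nat.pair 1 (Nat.pair i j)
  | .memFS i j => Nat.pair 2 (Nat.pair i j)
  | .not φ => Nat.pair 3 (encSO φ)
  | .and φ ψ => Nat.pair 4 (Nat.pair (encSO φ) (encSO ψ))
  | .allFO φ => Nat.pair 5 (encSO φ)
  | .exFO φ => Nat.pair 6 (encSO φ)
  | .allSO φ => Nat.pair 7 (encSO φ)
  | .exSO φ => Nat.pair 8 (encSO φ)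

private lemma encSO_inj : ∀ a b : SOFormula, encSO a = encSO b → a = b := by
  intro a
  induction a with
  | memFF i j => intro b h; cases b <;> simp_all [encSO, Nat.pair_eq_pair]
  | eqFF i j => intro b h; cases b <;> simp_all [encSO, Nat.pair_eq_pair]
  | memFS i j => intro b h; cases b <;> simp_all [encSO, Nat.pair_eq_pair]
  | not φ ih => intro b h; cases b <;> simp_all [encSO, Nat.pair_eq_pair]; exact ih _ rfl
  | and φ ψ ih1 ih2 =>
      intro b h; cases b <;> simp_all [encSO, Nat.pair_eq_pair]
      exact ⟨ih1 _ rfl, ih2 _ rfl⟩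
  | allFO φ ih => intro b h; cases b <;> simp_all [encSO, Nat.pair_eq_pair]; exact ih _ rfl
  | exFO φ ih => intro b h; cases b <;> simp_all [encSO, Nat.pair_eq_pair]; exact ih _ rfl
  | allSO φ ih => intro b h; cases b <;> simp_all [encSO, Nat.pair_eq_pair]; exact ih _ rfl
  | exSO φ ih => intro b h; cases b <;> simp_all [encSO, Nat.pair_eq_pair]; exact ih _ rfl

instance : Countable SOFormula := ⟨encSO, fun a b => encSO_inj a b⟩

end Aux

noncomputable def hFn (φ : SOFormula) (l : ℕ) (β : ℕ → Ordinal.{0}) : Ordinal.{0} :=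
  sInf {γ : Ordinal.{0} | γ < omega1V ∧ (∀ i, i < l → β i < γ) ∧
    SOSatIn (fun _ => True) (LSet γ) φ (paramVal l β) (fun _ => ∅)}

lemma hFn_lt (φ : SOFormula) (l : ℕ) (β : ℕ → Ordinal.{0}) : hFn φ l β < omega1V := by
  rcases Set.eq_empty_or_nonempty
      {γ : Ordinal.{0} | γ < omega1V ∧ (∀ i, i < l → β i < γ) ∧
        SOSatIn (fun _ => True) (LSet γ) φ (paramVal l β) (fun _ => ∅)} with he | hne
  · rw [hFn, he, Ordinal.sInf_empty]
    rw [omega1V, Cardinal.lt_ord]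
    simpa using Cardinal.aleph0_pos.trans_le (Cardinal.aleph0_le_aleph 1)
  · exact (csInf_mem hne).1

lemma paramVal_congr (l : ℕ) (β β' : ℕ → Ordinal.{0}) (h : ∀ i, i < l → β i = β' i) :
    paramVal l β = paramVal l β' := by
  funext i
  unfold paramVal
  split
  · next hi => rw [h i hi]
  · rfl

lemma hFn_congr (φ : SOFormula) (l : ℕ) (β β' : ℕ → Ordinal.{0})
    (h : ∀ i, i < l → β i = β' i) : hFn φ l β = hFn φ l β' := by
  unfold hFn
  rw [paramVal_congr l β β' h]
  congr 1
  ext γ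
  constructor
  · rintro ⟨h1, h2, h3⟩; exact ⟨h1, fun i hi => (h i hi) ▸ h2 i hi, h3⟩
  · rintro ⟨h1, h2, h3⟩; exact ⟨h1, fun i hi => (h i hi).symm ▸ h2 i hi, h3⟩

/-- the club of closure points -/
def Cset : Set Ordinal.{0} :=
  {α | α < omega1V ∧ α ≠ 0 ∧
    ∀ (φ : SOFormula) (l : ℕ) (β : ℕ → Ordinal.{0}),
      (∀ i, i < l → β i < α) → hFn φ l β < α}

lemma Cset_reflecting (Γ : SOClass) (n : ℕ) :
    Cset ⊆ {α | Reflecting Γ n α} := by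
  rintro α ⟨hα1, _, hcl⟩
  intro l β _ hlt φ _ hsat
  have hne : ({γ : Ordinal.{0} | γ < omega1V ∧ (∀ i, i < l → β i < γ) ∧
      SOSatIn (fun _ => True) (LSet γ) φ (paramVal l β) (fun _ => ∅)}).Nonempty :=
    ⟨α, hα1, hlt, hsat⟩
  have hmem := csInf_mem hne
  exact ⟨hFn φ l β, hmem.2.1, hcl φ l β hlt, hmem.2.2⟩


lemma omega1V_pos : 0 < omega1V := by
  rw [omega1V, Cardinal.lt_ord]
  simpa using Cardinal.aleph0_pos.trans_le (Cardinal.aleph0_le_aleph 1)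

lemma succ_lt_omega1V {ξ : Ordinal.{0}} (h : ξ < omega1V) : ξ + 1 < omega1V := by
  rw [Ordinal.add_one_eq_succ]
  exact (Cardinal.isSuccLimit_ord (Cardinal.aleph0_le_aleph 1)).succ_lt h

lemma cof_omega1V : omega1V.cof = Cardinal.aleph 1 :=
  Cardinal.isRegular_aleph_one.cof_eq

noncomputable def gFn (ξ : Ordinal.{0}) : Ordinal.{0} :=
  (ξ + 1) ⊔ (⨆ p : SOFormula × Σ l : ℕ, (Fin l → ξ.ToType),
    hFn p.1 p.2.1
      (fun i => if h : i < p.2.1 then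
        ((@Ordinal.ToType.mk ξ).symm (p.2.2 ⟨i, h⟩)).1 else 0) + 1)

lemma countable_toType {ξ : Ordinal.{0}} (h : ξ < omega1V) : Countable ξ.ToType := by
  rw [← Cardinal.mk_le_aleph0_iff, Cardinal.mk_toType]
  have h1 : ξ.card < Cardinal.aleph 1 := Cardinal.lt_ord.mp h
  rw [← Cardinal.succ_aleph0] at h1; exact Order.lt_succ_iff.mp h1

lemma self_lt_gFn (ξ : Ordinal.{0}) : ξ < gFn ξ := by
  have h1 : ξ < ξ + 1 := by
    rw [Ordinal.add_one_eq_succ]; exact Order.lt_succ ξ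
  exact h1.trans_le le_sup_left

lemma gFn_lt {ξ : Ordinal.{0}} (h : ξ < omega1V) : gFn ξ < omega1V := by
  haveI := countable_toType h
  apply sup_lt_iff.mpr
  constructor
  · exact succ_lt_omega1V h
  · apply Ordinal.iSup_lt_ord_lift
    · rw [Cardinal.lift_id, cof_omega1V]
      exact lt_of_le_of_lt (Cardinal.mk_le_aleph0_iff.mpr inferInstance)
        Cardinal.aleph0_lt_aleph_one
    · intro p
      exact succ_lt_omega1V (hFn_lt _ _ _)

noncomputable def aSeq (b : Ordinal.{0}) : ℕ → Ordinal.{0}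
  | 0 => b + 1
  | k+1 => gFn (aSeq b k)

lemma aSeq_lt {b : Ordinal.{0}} (hb : b < omega1V) : ∀ k, aSeq b k < omega1V
  | 0 => succ_lt_omega1V hb
  | k+1 => gFn_lt (aSeq_lt hb k)

lemma aSeq_mono (b : Ordinal.{0}) : Monotone (aSeq b) := by
  apply monotone_nat_of_le_succ
  intro k
  exact (self_lt_gFn (aSeq b k)).le

lemma Cset_unbounded : ∀ b < omega1V, ∃ γ ∈ Cset, b < γ ∧ γ < omega1V := by
  intro b hb
  set γ := ⨆ k, aSeq b k with hγdef
  have hbdd : BddAbove (Set.range (aSeq b)) := Ordinal.bddAbove_range _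
  have hle : ∀ k, aSeq b k ≤ γ := fun k => le_ciSup hbdd k
  have hγω : γ < omega1V := by
    apply Ordinal.iSup_lt_ord_lift
    · rw [Cardinal.lift_id, Cardinal.mk_nat, cof_omega1V]
      exact Cardinal.aleph0_lt_aleph_one
    · exact aSeq_lt hb
  have hbγ : b < γ := by
    have : b < aSeq b 0 := by
      rw [aSeq, Ordinal.add_one_eq_succ]; exact Order.lt_succ b
    exact this.trans_le (hle 0)
  refine ⟨γ, ⟨hγω, ?_, ?_⟩, hbγ, hγω⟩
  · exact fun h0 => (not_lt_of_ge (zero_le (a := b))) (h0 ▸ hbγ)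
  · intro φ l β hβ
    -- choose stages
    have hex : ∀ i, i < l → ∃ k, β i < aSeq b k := by
      intro i hi
      exact (lt_ciSup_iff hbdd).mp (hβ i hi)
    classical
    let kf : ℕ → ℕ := fun i => if hi : i < l then (hex i hi).choose else 0
    let K : ℕ := (Finset.range l).sup kf
    have hβK : ∀ i, i < l → β i < aSeq b K := by
      intro i hi
      have h1 : β i < aSeq b (kf i) := by
        simp only [kf, dif_pos hi]
        exact (hex i hi).choose_spec
      exact h1.trans_le (aSeq_mono b (Finset.le_sup (Finset.mem_range.mpr hi)))
    set ξ := aSeq b K with hξdef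
    -- package as index
    let p : SOFormula × Σ l : ℕ, (Fin l → ξ.ToType) :=
      ⟨φ, ⟨l, fun i => (@Ordinal.ToType.mk ξ) ⟨β i.1, hβK i.1 i.2⟩⟩⟩
    have hterm : hFn φ l β + 1 ≤ gFn ξ := by
      have hcongr : hFn p.1 p.2.1
          (fun i => if h : i < p.2.1 then
            ((@Ordinal.ToType.mk ξ).symm (p.2.2 ⟨i, h⟩)).1 else 0) = hFn φ l β := by
        apply hFn_congr
        intro i hi
        simp [p, dif_pos hi]
      calc hFn φ l β + 1
          = hFn p.1 p.2.1 (fun i => if h : i < p.2.1 then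
              ((@Ordinal.ToType.mk ξ).symm (p.2.2 ⟨i, h⟩)).1 else 0) + 1 := by
            rw [hcongr]
        _ ≤ ⨆ q : SOFormula × Σ l : ℕ, (Fin l → ξ.ToType),
              hFn q.1 q.2.1 (fun i => if h : i < q.2.1 then
                ((@Ordinal.ToType.mk ξ).symm (q.2.2 ⟨i, h⟩)).1 else 0) + 1 :=
            le_ciSup (Ordinal.bddAbove_range _) p
        _ ≤ gFn ξ := le_sup_right
    have : hFn φ l β + 1 ≤ γ := hterm.trans ((hle (K+1)).trans_eq' rfl)
    have hlt : hFn φ l β < hFn φ l β + 1 := by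
      rw [Ordinal.add_one_eq_succ]; exact Order.lt_succ _
    exact hlt.trans_le this

lemma Cset_club : IsClubIn Cset omega1V := by
  constructor
  · exact Cset_unbounded
  · intro δ hδω hδ0 hub
    refine ⟨hδω, hδ0, ?_⟩
    intro φ l β hβ
    classical
    let b : Ordinal.{0} := (Finset.range l).sup β
    have hbδ : b < δ := by
      apply Finset.sup_lt_iff (pos_iff_ne_zero.mpr hδ0) |>.mpr
      intro i hi
      exact hβ i (Finset.mem_range.mp hi)
    obtain ⟨γ', hγ'C, hbγ', hγ'δ⟩ := hub b hbδ
    have : hFn φ l β < γ' := by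
      apply hγ'C.2.2 φ l β
      intro i hi
      exact lt_of_le_of_lt (Finset.le_sup (Finset.mem_range.mpr hi)) hbγ'
    exact this.trans hγ'δ


/-- For every `n < ω` and every `Γ ∈ {Σ, Π}`, the least `Γ¹ₙ`-reflecting
ordinal is countable; indeed, the set of `Γ¹ₙ`-reflecting ordinals contains a club subset
of `ω₁`. -/
theorem least_reflecting_countable_and_club (n : ℕ) (Γ : SOClass) :
    leastReflecting (fun _ => True) Γ n < omega1V ∧
    ∃ C : Set Ordinal.{0}, C ⊆ {α | Reflecting Γ n α} ∧ IsClubIn C omega1V := by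
  obtain ⟨γ, hγC, _, hγω⟩ := Cset_unbounded 0 omega1V_pos
  constructor
  · have hγrefl : γ ∈ {α | Reflecting Γ n α} := Cset_reflecting Γ n hγC
    have : leastReflecting (fun _ => True) Γ n ≤ γ := csInf_le' hγrefl
    exact this.trans_lt hγω
  · exact ⟨Cset, Cset_reflecting Γ n, Cset_club⟩
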